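/- Possibility-preservation characterization (Proposition 2, semantic-set form): Let A, B : W → {0,1/2,1} be truth assignments on a finite set W, and suppose there exists a world w0 with B(w0)=0 (so that B is not certain under every distribution). Then the following are equivalent: (i) for every w, A(w)=1 implies B(w)=1; (ii) for every probability mass function c with c{A=1/2} < 1, if p_c(A) > 0 then p_c(B) > 0. -/
import Mathlib


/-- The set of trivalent truth values {0, 1/2, 1} inside ℚ. -/
def Tri (x : ℚ) : Prop := x = 0 ∨ x = 1/2 ∨ x = 1

/-- Cooper conditional: f→(0,y)=1/2, f→(1,y)=y, f→(1/2,y)=y (on trivalent values). -/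
def tcond (a b : ℚ) : ℚ := if a = 0 then 1/2 else b

/-- Quasi-conjunction. -/
def tand (a b : ℚ) : ℚ :=
  if a = 0 ∨ b = 0 then 0 else if a = 1 ∨ b = 1 then 1 else 1/2

/-- Quasi-disjunction. -/
def tor (a b : ℚ) : ℚ :=
  if a = 1 ∨ b = 1 then 1 else if a = 0 ∨ b = 0 then 0 else 1/2

/-- Strong Kleene negation. -/
def tneg (a : ℚ) : ℚ := 1 - a

open Finset in
/-- Weight of the worlds where the assignment `v` takes the value `x`. -/
def wt {W : Type*} [Fintype W] (c : W → ℝ) (v : W → ℚ) (x : ℚ) : ℝ :=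
  ∑ w ∈ Finset.univ.filter (fun w => v w = x), c w

/-- Trivalent probability of a truth assignment. -/
noncomputable def pv {W : Type*} [Fintype W] (c : W → ℝ) (v : W → ℚ) : ℝ :=
  if 0 < wt c v 1 + wt c v 0 then wt c v 1 / (wt c v 1 + wt c v 0) else 1

open Finset

lemma wt_nonneg {W : Type*} [Fintype W] {c : W → ℝ} (hc : ∀ w, 0 ≤ c w) (v : W → ℚ) (x : ℚ) :
    0 ≤ wt c v x := Finset.sum_nonneg fun w _ => hc w

lemma le_wt {W : Type*} [Fintype W] {c : W → ℝ} (hc : ∀ w, 0 ≤ c w) {v : W → ℚ} {x : ℚ}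
    {w : W} (h : v w = x) : c w ≤ wt c v x :=
  Finset.single_le_sum (fun i _ => hc i) (by simp [h])

lemma sum_tri {W : Type*} [Fintype W] (c : W → ℝ) (v : W → ℚ) (hv : ∀ w, Tri (v w)) :
    ∑ w, c w = wt c v 0 + wt c v (1/2) + wt c v 1 := by
  unfold wt
  rw [Finset.sum_filter, Finset.sum_filter, Finset.sum_filter, ← Finset.sum_add_distrib,
    ← Finset.sum_add_distrib]
  refine Finset.sum_congr rfl fun w _ => ?_
  rcases hv w with h | h | h <;> rw [h] <;> norm_num


/-- Characterization of possibility-preserving inference. -/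
theorem possibility_preservation_characterization {W : Type*} [Fintype W] [Nonempty W]
    (A B : W → ℚ) (hA : ∀ w, Tri (A w)) (hB : ∀ w, Tri (B w))
    (hex : ∃ w0, B w0 = 0) :
    (∀ w, A w = 1 → B w = 1) ↔
      (∀ c : W → ℝ, (∀ w, 0 ≤ c w) → (∑ w, c w) = 1 →
        wt c A (1/2) < 1 → 0 < pv c A → 0 < pv c B) := by
  constructor
  · intro h c hc hsum hhalf hpA
    by_cases hd : 0 < wt c A 1 + wt c A 0
    · rw [pv, if_pos hd] at hpA
      have h1 : 0 < wt c A 1 := by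
        by_contra hle
        have : wt c A 1 = 0 := le_antisymm (not_lt.1 hle) (wt_nonneg hc A 1)
        rw [this, zero_div] at hpA; exact lt_irrefl _ hpA
      obtain ⟨w, hw, hcw⟩ : ∃ w ∈ Finset.univ.filter (fun w => A w = 1), c w ≠ 0 := by
        by_contra hno
        push_neg at hno
        have : wt c A 1 = 0 := Finset.sum_eq_zero hno
        rw [this] at h1; exact lt_irrefl _ h1
      simp only [Finset.mem_filter] at hw
      have hcwpos : 0 < c w := lt_of_le_of_ne (hc w) (Ne.symm hcw)
      have hB1 : 0 < wt c B 1 := lt_of_lt_of_le hcwpos (le_wt hc (h w hw.2))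
      rw [pv]
      split
      · exact div_pos hB1 (by assumption)
      · norm_num
    · exfalso
      have h1 : wt c A 1 = 0 := le_antisymm (by nlinarith [wt_nonneg hc A 0, wt_nonneg hc A 1]) (wt_nonneg hc A 1)
      have h0 : wt c A 0 = 0 := le_antisymm (by nlinarith [wt_nonneg hc A 0, wt_nonneg hc A 1]) (wt_nonneg hc A 0)
      have := sum_tri c A hA
      rw [hsum, h1, h0] at this
      linarith
  · intro h w hw1
    by_contra hBw
    obtain ⟨w0, hw0⟩ := hex
    classical
    set c : W → ℝ := fun x => (if x = w then (1:ℝ)/2 else 0) + (if x = w0 then 1/2 else 0) with hcdef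
    have hc : ∀ x, 0 ≤ c x := fun x => by positivity
    have hsum : ∑ x, c x = 1 := by
      rw [hcdef, Finset.sum_add_distrib, Finset.sum_ite_eq' univ w (fun _ => (1:ℝ)/2),
        Finset.sum_ite_eq' univ w0 (fun _ => (1:ℝ)/2)]
      simp; norm_num
    have hcw : (1:ℝ)/2 ≤ c w := by
      rw [hcdef]; simp only [if_pos rfl, if_true]
      split <;> norm_num
    have hcw0 : (1:ℝ)/2 ≤ c w0 := by
      rw [hcdef]; simp only [if_pos rfl, if_true]
      split <;> norm_num
    have hhalf : wt c A (1/2) < 1 := by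
      unfold wt
      rw [hcdef]
      rw [Finset.sum_add_distrib]
      have e1 : ∑ x ∈ univ.filter (fun x => A x = 1/2), (if x = w then (1:ℝ)/2 else 0) = 0 := by
        apply Finset.sum_eq_zero
        intro x hx
        simp only [Finset.mem_filter] at hx
        have : x ≠ w := by rintro rfl; rw [hw1] at hx; norm_num at hx
        simp [this]
      rw [e1, Finset.sum_ite_eq' _ w0 (fun _ => (1:ℝ)/2)]
      split <;> norm_num
    have hpA : 0 < pv c A := by
      have h1 : 0 < wt c A 1 := lt_of_lt_of_le (by norm_num : (0:ℝ) < 1/2) (le_trans hcw (le_wt hc hw1))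
      have h0 : 0 ≤ wt c A 0 := wt_nonneg hc A 0
      rw [pv, if_pos (by linarith)]
      exact div_pos h1 (by linarith)
    have hpB := h c hc hsum hhalf hpA
    have hB1 : wt c B 1 = 0 := by
      apply Finset.sum_eq_zero
      intro x hx
      simp only [Finset.mem_filter] at hx
      have hxw : x ≠ w := by rintro rfl; exact hBw hx.2
      have hxw0 : x ≠ w0 := by rintro rfl; rw [hw0] at hx; norm_num at hx
      simp [hcdef, hxw, hxw0]
    have hB0 : 0 < wt c B 0 := lt_of_lt_of_le (by norm_num : (0:ℝ) < 1/2) (le_trans hcw0 (le_wt hc hw0))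
    rw [pv, if_pos (by rw [hB1]; linarith), hB1, zero_div] at hpB
    exact lt_irrefl _ hpB
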